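/- (Matrix-Tree theorem) Let W = (w_{ij}) be a symmetric matrix of weights on vertex set V = {1,...,n}, and let Δ be its Laplacian, defined by Δ_{ij} = -w_{ij} for i ≠ j and Δ_{ii} = Σ_j w_{ij}. Then for any pair (u,v), the (u,v)-minor of Δ equals Σ_{T ∈ 𝒯} Π_{{i,j} ∈ E_T} w_{ij}, where 𝒯 is the set of spanning trees of the complete graph on V. In particular, all (u,v)-minors of Δ are equal. -/

import Mathlib

open scoped Classical
set_option linter.unusedSectionVars false
set_option maxHeartbeats 1000000

namespace MTT

noncomputable section
open Finset Matrix

variable {α : Type*} [DecidableEq α] [Nonempty α]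

/-- Selection of the elements of a finset of card `k` as a function from `Fin k`. -/
def sel (k : ℕ) (S : Finset α) : Fin k → α :=
  if h : S.card = k then fun j => (S.equivFin.symm (Fin.cast h.symm j) : α)
  else fun _ => Classical.arbitrary α

theorem sel_mem {k : ℕ} {S : Finset α} (h : S.card = k) (j : Fin k) : sel k S j ∈ S := by
  simp only [sel, dif_pos h]; exact (S.equivFin.symm (Fin.cast h.symm j)).2

theorem sel_inj {k : ℕ} {S : Finset α} (h : S.card = k) : Function.Injective (sel k S) := by
  simp only [sel, dif_pos h]
  intro a b hab
  have := S.equivFin.symm.injective (Subtype.ext hab)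
  simpa [Fin.ext_iff] using this

theorem sel_surj {k : ℕ} {S : Finset α} (h : S.card = k) {e : α} (he : e ∈ S) :
    ∃ j, sel k S j = e := by
  simp only [sel, dif_pos h]
  exact ⟨Fin.cast h (S.equivFin ⟨e, he⟩), by simp [Fin.ext_iff]⟩

/-- Cauchy–Binet style expansion. -/
theorem cauchy_binet {k : ℕ} (E : Finset α) (A B : Fin k → α → ℝ) (d : α → ℝ) :
    Matrix.det (Matrix.of fun i j => ∑ e ∈ E, A i e * d e * B j e)
      = ∑ S ∈ E.powersetCard k, (∏ e ∈ S, d e)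
          * Matrix.det (Matrix.of fun i j => A i (sel k S j))
          * Matrix.det (Matrix.of fun i j => B i (sel k S j)) := by
  classical
  set F : (Fin k → α) → ℝ := fun p =>
    (∏ i, (A i (p i) * d (p i))) * Matrix.det (Matrix.of fun i j => B j (p i)) with hF
  -- Step 1: multilinear expansion in the rows.
  have h1 : Matrix.det (Matrix.of fun i j => ∑ e ∈ E, A i e * d e * B j e)
      = ∑ p ∈ Fintype.piFinset (fun _ : Fin k => E), F p := by
    have hrw : (Matrix.of fun i j => ∑ e ∈ E, A i e * d e * B j e)
        = fun i => ∑ e ∈ E, (A i e * d e) • (fun j => B j e) := by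
      funext i j
      simp [Finset.sum_apply, mul_assoc]
    show Matrix.detRowAlternating (Matrix.of fun i j => ∑ e ∈ E, A i e * d e * B j e) = _
    rw [hrw]
    show (Matrix.detRowAlternating :
      (Fin k → ℝ) [⋀^Fin k]→ₗ[ℝ] ℝ).toMultilinearMap
        (fun i => ∑ e ∈ E, (A i e * d e) • (fun j => B j e)) = _
    rw [MultilinearMap.map_sum_finset]
    apply Finset.sum_congr rfl
    intro p _
    rw [MultilinearMap.map_smul_univ]
    rfl
  rw [h1]
  -- Step 2: non-injective terms vanish.
  rw [← Finset.sum_filter_of_ne (p := fun p => Function.Injective p) (fun p _ hne => by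
    by_contra hni
    obtain ⟨i1, i2, heq, hne12⟩ := Function.not_injective_iff.mp hni
    apply hne
    rw [hF]
    have hdet0 : Matrix.det (Matrix.of fun i j => B j (p i)) = 0 := by
      apply Matrix.det_zero_of_row_eq hne12
      funext j
      simp [heq]
    simp [hdet0])]
  -- Step 3: reindex injective functions by (subset, permutation) pairs.
  have hcard : ∀ p : Fin k → α, Function.Injective p → (Finset.univ.image p).card = k := by
    intro p hp
    rw [Finset.card_image_of_injective _ hp, Finset.card_univ, Fintype.card_fin]
  set g : (Fin k → α) → Fin k → Fin k := fun p i =>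
    if hp : Function.Injective p then
      Classical.choose (sel_surj (hcard p hp) (Finset.mem_image_of_mem p (Finset.mem_univ i)))
    else i with hg
  have hgspec : ∀ p, ∀ hp : Function.Injective p, ∀ i,
      sel k (Finset.univ.image p) (g p i) = p i := by
    intro p hp i
    rw [hg]
    dsimp only
    rw [dif_pos hp]
    exact Classical.choose_spec
      (sel_surj (hcard p hp) (Finset.mem_image_of_mem p (Finset.mem_univ i)))
  have hgbij : ∀ p, Function.Injective p → Function.Bijective (g p) := by
    intro p hp
    apply Finite.injective_iff_bijective.mp
    intro i1 i2 h12
    apply hp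
    rw [← hgspec p hp i1, ← hgspec p hp i2, h12]
  have hre : ∑ p ∈ (Fintype.piFinset (fun _ : Fin k => E)).filter
        (fun p => Function.Injective p), F p
      = ∑ x ∈ (E.powersetCard k) ×ˢ (Finset.univ : Finset (Equiv.Perm (Fin k))),
          F (fun i => sel k x.1 (x.2 i)) := by
    refine (Finset.sum_nbij'
      (i := fun (x : Finset α × Equiv.Perm (Fin k)) => fun i => sel k x.1 (x.2 i))
      (j := fun p => (Finset.univ.image p,
        if hp : Function.Injective p then Equiv.ofBijective (g p) (hgbij p hp)
        else Equiv.refl _))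
      ?_ ?_ ?_ ?_ ?_).symm
    · rintro ⟨S, σ⟩ hx
      obtain ⟨hS, -⟩ := Finset.mem_product.mp hx
      obtain ⟨hsub, hc⟩ := Finset.mem_powersetCard.mp hS
      refine Finset.mem_filter.mpr ⟨?_, ?_⟩
      · exact Fintype.mem_piFinset.mpr fun i => hsub (sel_mem hc (σ i))
      · exact (sel_inj hc).comp σ.injective
    · intro p hp
      obtain ⟨hpi, hinj⟩ := Finset.mem_filter.mp hp
      have hpe : ∀ i, p i ∈ E := Fintype.mem_piFinset.mp hpi
      refine Finset.mem_product.mpr ⟨?_, Finset.mem_univ _⟩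
      refine Finset.mem_powersetCard.mpr ⟨?_, hcard p hinj⟩
      intro y hy
      obtain ⟨i, -, rfl⟩ := Finset.mem_image.mp hy
      exact hpe i
    · rintro ⟨S, σ⟩ hx
      obtain ⟨hS, -⟩ := Finset.mem_product.mp hx
      obtain ⟨hsub, hc⟩ := Finset.mem_powersetCard.mp hS
      dsimp only
      have hpinj : Function.Injective (fun i => sel k S (σ i)) :=
        (sel_inj hc).comp σ.injective
      have him : Finset.univ.image (fun i => sel k S (σ i)) = S := by
        apply Finset.eq_of_subset_of_card_le
        · intro y hy
          obtain ⟨i, -, rfl⟩ := Finset.mem_image.mp hy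
          exact sel_mem hc (σ i)
        · rw [hc, hcard _ hpinj]
      rw [Prod.mk.injEq]
      refine ⟨him, ?_⟩
      rw [dif_pos hpinj]
      ext i
      have hsp := hgspec _ hpinj i
      rw [him] at hsp
      exact congrArg Fin.val (sel_inj hc hsp)
    · intro p hp
      obtain ⟨hpi, hinj⟩ := Finset.mem_filter.mp hp
      dsimp only
      rw [dif_pos hinj]
      funext i
      exact hgspec p hinj i
    · intro x hx
      rfl
  rw [hre, Finset.sum_product]
  apply Finset.sum_congr rfl
  intro S hS
  obtain ⟨hsub, hc⟩ := Finset.mem_powersetCard.mp hS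
  have hdprod : ∀ σ : Equiv.Perm (Fin k), (∏ i, d (sel k S (σ i))) = ∏ e ∈ S, d e := by
    intro σ
    rw [Equiv.prod_comp σ (fun i => d (sel k S i))]
    exact Finset.prod_bij (fun i _ => sel k S i) (fun i _ => sel_mem hc i)
      (fun i _ j _ hij => sel_inj hc hij)
      (fun e he => ⟨(sel_surj hc he).choose, Finset.mem_univ _, (sel_surj hc he).choose_spec⟩)
      (fun i _ => rfl)
  have hstep : ∀ σ : Equiv.Perm (Fin k),
      F (fun i => sel k S (σ i))
      = ((∏ e ∈ S, d e) * Matrix.det (Matrix.of fun i j => B i (sel k S j)))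
          * (((Equiv.Perm.sign σ : ℤ) : ℝ) * ∏ i, A i (sel k S (σ i))) := by
    intro σ
    rw [hF]
    dsimp only
    rw [Finset.prod_mul_distrib, hdprod σ]
    have hsub1 : (Matrix.of fun i j => B j (sel k S (σ i)))
        = (Matrix.of fun i j => B j (sel k S i)).submatrix σ id := rfl
    have hsub2 : (Matrix.of fun i j => B j (sel k S i))
        = (Matrix.of fun i j => B i (sel k S j)).transpose := rfl
    rw [hsub1, Matrix.det_permute, hsub2, Matrix.det_transpose]
    push_cast
    ring
  rw [Finset.sum_congr rfl (fun σ _ => hstep σ), ← Finset.mul_sum]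
  have hdetA : ∑ σ : Equiv.Perm (Fin k),
      ((Equiv.Perm.sign σ : ℤ) : ℝ) * ∏ i, A i (sel k S (σ i))
      = Matrix.det (Matrix.of fun p q => A q (sel k S p)) := by
    rw [Matrix.det_apply']
    rfl
  rw [hdetA]
  have htr : (Matrix.of fun p q => A q (sel k S p))
      = (Matrix.of fun i j => A i (sel k S j)).transpose := rfl
  rw [htr, Matrix.det_transpose]
  ring

/-- Total unimodularity for incidence-like matrices. -/
theorem unimodular {k : ℕ} (M : Matrix (Fin k) (Fin k) ℝ)
    (h1 : ∀ i j, M i j = 0 ∨ M i j = 1 ∨ M i j = -1)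
    (h2 : ∀ j i i', M i j = 1 → M i' j = 1 → i = i')
    (h3 : ∀ j i i', M i j = -1 → M i' j = -1 → i = i') :
    M.det = 0 ∨ M.det = 1 ∨ M.det = -1 := by
  induction k with
  | zero => right; left; exact Matrix.det_fin_zero
  | succ k ih =>
    by_cases hcol : ∃ j i, M i j ≠ 0 ∧ ∀ i', i' ≠ i → M i' j = 0
    · obtain ⟨j0, i0, hne, hzero⟩ := hcol
      rw [Matrix.det_succ_column M j0, Finset.sum_eq_single i0 ?hother (by simp)]
      case hother =>
        intro b _ hb
        rw [hzero b hb]; ring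
      have hd := ih (M.submatrix i0.succAbove j0.succAbove)
        (fun i j => h1 _ _)
        (fun j i i' ha hb => Fin.succAbove_right_injective (h2 _ _ _ ha hb))
        (fun j i i' ha hb => Fin.succAbove_right_injective (h3 _ _ _ ha hb))
      have hm := (h1 i0 j0).resolve_left hne
      have hp := neg_one_pow_eq_or ℝ (i0.val + j0.val)
      rcases hp with hp | hp <;> rcases hm with hm | hm <;>
        rcases hd with hd | hd | hd <;> rw [hp, hm, hd] <;> norm_num
    · have hsum : ∀ j, ∑ i, M i j = 0 := by
        intro j
        by_cases hz : ∀ i, M i j = 0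
        · simp [hz]
        · push_neg at hz; obtain ⟨i, hi⟩ := hz
          have hex : ∃ i', i' ≠ i ∧ M i' j ≠ 0 := by
            by_contra hno; push_neg at hno
            exact hcol ⟨j, i, hi, fun i' h => hno i' h⟩
          obtain ⟨i', hii', hi'⟩ := hex
          have e1 := (h1 i j).resolve_left hi
          have e2 := (h1 i' j).resolve_left hi'
          have hop : (M i j = 1 ∧ M i' j = -1) ∨ (M i j = -1 ∧ M i' j = 1) := by
            rcases e1 with e1 | e1 <;> rcases e2 with e2 | e2
            · exact absurd (h2 j i' i e2 e1) hii'
            · exact Or.inl ⟨e1, e2⟩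
            · exact Or.inr ⟨e1, e2⟩
            · exact absurd (h3 j i' i e2 e1) hii'
          have hoth : ∀ c, c ≠ i → c ≠ i' → M c j = 0 := by
            intro c hc hc'
            rcases h1 c j with h | h | h
            · exact h
            · rcases hop with ⟨a, b⟩ | ⟨a, b⟩
              · exact absurd (h2 j c i h a) hc
              · exact absurd (h2 j c i' h b) hc'
            · rcases hop with ⟨a, b⟩ | ⟨a, b⟩
              · exact absurd (h3 j c i' h b) hc'
              · exact absurd (h3 j c i h a) hc
          have hres : ∑ i'', M i'' j = ∑ i'' ∈ ({i, i'} : Finset _), M i'' j := by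
            refine (Finset.sum_subset (Finset.subset_univ _) ?_).symm
            intro x _ hx
            simp only [Finset.mem_insert, Finset.mem_singleton] at hx
            push_neg at hx
            exact hoth x hx.1 hx.2
          rw [hres, Finset.sum_pair (fun h => hii' h.symm)]
          rcases hop with ⟨a, b⟩ | ⟨a, b⟩ <;> rw [a, b] <;> ring
      left
      rw [← Matrix.exists_vecMul_eq_zero_iff]
      refine ⟨fun _ => 1, ?_, ?_⟩
      · intro h
        have := congrFun h 0
        norm_num at this
      · funext j
        simpa [Matrix.vecMul, dotProduct] using hsum j

variable {m : ℕ}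

/-- The incidence vector of an ordered pair. -/
def inc (e : Fin (m + 2) × Fin (m + 2)) : Fin (m + 2) → ℝ :=
  fun a => (if a = e.1 then 1 else 0) - (if a = e.2 then 1 else 0)

/-- The edge set of the complete graph, as ordered pairs. -/
def edges (m : ℕ) : Finset (Fin (m + 2) × Fin (m + 2)) :=
  Finset.univ.filter fun p => p.1 < p.2

/-- The graph determined by a finset of ordered pairs. -/
def graphOf (S : Finset (Fin (m + 2) × Fin (m + 2))) : SimpleGraph (Fin (m + 2)) where
  Adj a b := a ≠ b ∧ ((a, b) ∈ S ∨ (b, a) ∈ S)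
  symm := by constructor; intro a b ⟨h1, h2⟩; exact ⟨h1.symm, h2.symm⟩
  loopless := by constructor; intro a ⟨h1, _⟩; exact h1 rfl

/-- The reduced incidence matrix: rows are vertices other than `u`, columns the
elements of `S`. -/
def NM (u : Fin (m + 2)) (S : Finset (Fin (m + 2) × Fin (m + 2))) :
    Matrix (Fin (m + 1)) (Fin (m + 1)) ℝ :=
  Matrix.of fun i j => inc (sel (m + 1) S j) (u.succAbove i)

theorem span_walk {S : Finset (Fin (m + 2) × Fin (m + 2))} {a b : Fin (m + 2)}
    (p : (graphOf S).Walk a b) :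
    (Pi.single a 1 - Pi.single b 1 : Fin (m + 2) → ℝ)
      ∈ Submodule.span ℝ (inc '' (S : Set (Fin (m + 2) × Fin (m + 2)))) := by
  induction p with
  | nil => simp
  | @cons a c b h q ih =>
    have h1 : (Pi.single a 1 - Pi.single c 1 : Fin (m + 2) → ℝ)
        ∈ Submodule.span ℝ (inc '' (S : Set (Fin (m + 2) × Fin (m + 2)))) := by
      rcases h.2 with hm | hm
      · have he : inc ((a, c) : Fin (m + 2) × Fin (m + 2))
            = (Pi.single a 1 - Pi.single c 1 : Fin (m + 2) → ℝ) := by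
          funext x; simp [inc, Pi.single_apply]
        rw [← he]
        exact Submodule.subset_span ⟨(a, c), hm, rfl⟩
      · have he : inc ((c, a) : Fin (m + 2) × Fin (m + 2))
            = (Pi.single c 1 - Pi.single a 1 : Fin (m + 2) → ℝ) := by
          funext x; simp [inc, Pi.single_apply]
        have hneg : (Pi.single a 1 - Pi.single c 1 : Fin (m + 2) → ℝ)
            = -(inc ((c, a) : Fin (m + 2) × Fin (m + 2))) := by rw [he]; abel
        rw [hneg]
        exact Submodule.neg_mem _ (Submodule.subset_span ⟨(c, a), hm, rfl⟩)
    have := Submodule.add_mem _ h1 ih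
    convert this using 1
    abel

theorem inc_one {e : Fin (m + 2) × Fin (m + 2)} {a : Fin (m + 2)} (h : inc e a = 1) :
    a = e.1 := by
  revert h; unfold inc; split_ifs <;> intro h <;> first | assumption | norm_num at h

theorem inc_negone {e : Fin (m + 2) × Fin (m + 2)} {a : Fin (m + 2)} (h : inc e a = -1) :
    a = e.2 := by
  revert h; unfold inc; split_ifs <;> intro h <;> first | assumption | norm_num at h

theorem nm_unimod (u : Fin (m + 2)) (S : Finset (Fin (m + 2) × Fin (m + 2))) :
    (NM u S).det = 0 ∨ (NM u S).det = 1 ∨ (NM u S).det = -1 := by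
  apply unimodular
  · intro i j
    simp only [NM, Matrix.of_apply, inc]
    split_ifs <;> norm_num
  · intro j i i' ha hb
    exact Fin.succAbove_right_injective ((inc_one ha).trans (inc_one hb).symm)
  · intro j i i' ha hb
    exact Fin.succAbove_right_injective ((inc_negone ha).trans (inc_negone hb).symm)

theorem nm_det_ne_zero (u : Fin (m + 2)) {S : Finset (Fin (m + 2) × Fin (m + 2))}
    (hc : S.card = m + 1) (hconn : (graphOf S).Connected) : (NM u S).det ≠ 0 := by
  intro h0
  obtain ⟨y, hy0, hy⟩ := Matrix.exists_vecMul_eq_zero_iff.mpr h0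
  set Y : Fin (m + 2) → ℝ := fun a => ∑ i, y i * (if u.succAbove i = a then 1 else 0)
    with hYdef
  have hYu : Y u = 0 := Finset.sum_eq_zero fun i _ => by
    rw [if_neg (Fin.succAbove_ne u i), mul_zero]
  have hYs : ∀ i, Y (u.succAbove i) = y i := by
    intro i
    have : Y (u.succAbove i) = ∑ i', y i' * (if u.succAbove i' = u.succAbove i then 1 else 0) :=
      rfl
    rw [this, Finset.sum_eq_single i (fun b _ hb => by
      rw [if_neg (fun hh => hb (Fin.succAbove_right_injective hh)), mul_zero]) (by simp),
      if_pos rfl, mul_one]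
  have hedge : ∀ e ∈ S, Y e.1 = Y e.2 := by
    intro e he
    obtain ⟨j, hj⟩ := sel_surj hc he
    have hj' := congrFun hy j
    simp only [Matrix.vecMul, dotProduct, NM, Matrix.of_apply, inc, hj,
      Pi.zero_apply, mul_sub, Finset.sum_sub_distrib] at hj'
    have h2 : Y e.1 - Y e.2 = 0 := hj'
    linarith
  have hwalk : ∀ (a b : Fin (m + 2)), (graphOf S).Walk a b → Y a = Y b := by
    intro a b p
    induction p with
    | nil => rfl
    | @cons x z w h q ih =>
      have hxz : Y x = Y z := by
        rcases h.2 with hm | hm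
        · exact hedge _ hm
        · exact (hedge _ hm).symm
      rw [hxz]; exact ih
  apply hy0
  funext i
  have hw := hwalk u (u.succAbove i) (hconn.preconnected u (u.succAbove i)).some
  rw [hYu, hYs i] at hw
  exact hw.symm

theorem nm_det_zero (u : Fin (m + 2)) {S : Finset (Fin (m + 2) × Fin (m + 2))}
    (hc : S.card = m + 1) (hconn : ¬ (graphOf S).Connected) : (NM u S).det = 0 := by
  rw [← Matrix.exists_vecMul_eq_zero_iff]
  have hx : ∃ x, ¬ (graphOf S).Reachable u x := by
    by_contra hall; push_neg at hall
    exact hconn ⟨fun a b => (hall a).symm.trans (hall b)⟩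
  obtain ⟨x, hxr⟩ := hx
  have hxu : x ≠ u := fun h => hxr (h ▸ SimpleGraph.Reachable.refl x)
  have hxne : ∀ c, (graphOf S).Reachable x c → c ≠ u := fun c hr hcu =>
    hxr (hcu ▸ hr).symm
  set y : Fin (m + 1) → ℝ :=
    fun i => if (graphOf S).Reachable x (u.succAbove i) then 1 else 0 with hydef
  have hZ : ∀ c : Fin (m + 2), (∑ i, y i * (if u.succAbove i = c then 1 else 0))
      = if c ≠ u ∧ (graphOf S).Reachable x c then 1 else 0 := by
    intro c
    by_cases hcu : c = u
    · subst hcu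
      rw [Finset.sum_eq_zero fun i _ => by
        rw [if_neg (Fin.succAbove_ne c i), mul_zero]]
      simp
    · obtain ⟨i0, hi0⟩ := Fin.exists_succAbove_eq hcu
      rw [Finset.sum_eq_single i0 (fun b _ hb => by
        rw [if_neg (fun hh => hb (Fin.succAbove_right_injective (hh.trans hi0.symm))),
          mul_zero]) (by simp), if_pos hi0, mul_one, hydef]
      simp only [hi0]
      by_cases hr : (graphOf S).Reachable x c
      · rw [if_pos hr, if_pos ⟨hcu, hr⟩]
      · rw [if_neg hr, if_neg (fun hh => hr hh.2)]
  refine ⟨y, ?_, ?_⟩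
  · obtain ⟨i, hi⟩ := Fin.exists_succAbove_eq hxu
    intro h
    have hcf := congrFun h i
    rw [hydef] at hcf
    simp only [hi] at hcf
    rw [if_pos (SimpleGraph.Reachable.refl x)] at hcf
    norm_num at hcf
  · funext j
    set e := sel (m + 1) S j with hedef
    have hcol : (y ᵥ* NM u S) j
        = (∑ i, y i * (if u.succAbove i = e.1 then 1 else 0))
          - (∑ i, y i * (if u.succAbove i = e.2 then 1 else 0)) := by
      simp only [Matrix.vecMul, dotProduct, NM, Matrix.of_apply, inc, ← hedef,
        mul_sub, Finset.sum_sub_distrib]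
    rw [hcol, hZ, hZ]
    by_cases h12 : e.1 = e.2
    · rw [h12]; simp
    · have hadj : (graphOf S).Adj e.1 e.2 := ⟨h12, Or.inl (sel_mem hc j)⟩
      by_cases hr : (graphOf S).Reachable x e.1
      · have hr2 : (graphOf S).Reachable x e.2 := hr.trans hadj.reachable
        rw [if_pos ⟨hxne _ hr, hr⟩, if_pos ⟨hxne _ hr2, hr2⟩]
        simp
      · have hr2 : ¬ (graphOf S).Reachable x e.2 :=
          fun hh => hr (hh.trans hadj.symm.reachable)
        rw [if_neg (fun hh => hr hh.2), if_neg (fun hh => hr2 hh.2)]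
        simp

theorem acyclic_of_connected {S : Finset (Fin (m + 2) × Fin (m + 2))}
    (hS : S ∈ (edges m).powersetCard (m + 1)) (hconn : (graphOf S).Connected) :
    (graphOf S).IsAcyclic := by
  obtain ⟨hsub, hc⟩ := Finset.mem_powersetCard.mp hS
  intro x c hcyc
  cases c with
  | nil => exact hcyc.ne_nil rfl
  | @cons _ y _ h q =>
    have hnodup := hcyc.isCircuit.isTrail.edges_nodup
    rw [SimpleGraph.Walk.edges_cons] at hnodup
    have hxy : s(x, y) ∉ q.edges := (List.nodup_cons.mp hnodup).1
    have key : ∀ e0 ∈ S, (e0 = (x, y) ∨ e0 = (y, x)) → False := by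
      intro e0 he0S he0
      -- transfer q to the graph without e0
      have hq' : ∀ d ∈ q.edges, d ∈ (graphOf (S.erase e0)).edgeSet := by
        intro d hd
        have hdS : d ∈ (graphOf S).edgeSet := q.edges_subset_edgeSet hd
        have hdne : d ≠ s(x, y) := fun hh => hxy (hh ▸ hd)
        revert hdS hdne
        refine Sym2.ind (fun a b => ?_) d
        intro hdS hdne
        rw [SimpleGraph.mem_edgeSet] at hdS ⊢
        obtain ⟨hne, hm'⟩ := hdS
        have hab : (a, b) ≠ e0 := by
          intro hh
          apply hdne
          rcases he0 with he0 | he0 <;> rw [he0, Prod.mk.injEq] at hh <;> obtain ⟨rfl, rfl⟩ := hh <;>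
              simp [Sym2.eq_swap]
        have hba : (b, a) ≠ e0 := by
          intro hh
          apply hdne
          rcases he0 with he0 | he0 <;> rw [he0, Prod.mk.injEq] at hh <;> obtain ⟨rfl, rfl⟩ := hh <;>
              simp [Sym2.eq_swap]
        refine ⟨hne, ?_⟩
        rcases hm' with hm' | hm'
        · exact Or.inl (Finset.mem_erase.mpr ⟨hab, hm'⟩)
        · exact Or.inr (Finset.mem_erase.mpr ⟨hba, hm'⟩)
      have hspan := span_walk (q.transfer (graphOf (S.erase e0)) hq')
      -- hspan : single y - single x ∈ span (inc '' erase)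
      have hinc : inc e0 ∈ Submodule.span ℝ
          (inc '' ((S.erase e0) : Set (Fin (m + 2) × Fin (m + 2)))) := by
        rcases he0 with he0 | he0
        · have : inc e0 = -(Pi.single y 1 - Pi.single x 1 : Fin (m + 2) → ℝ) := by
            funext t; rw [he0]; simp [inc, Pi.single_apply]; try ring
          rw [this]
          exact Submodule.neg_mem _ hspan
        · have : inc e0 = (Pi.single y 1 - Pi.single x 1 : Fin (m + 2) → ℝ) := by
            funext t; rw [he0]; simp [inc, Pi.single_apply]
          rw [this]
          exact hspan
      -- restrict to rows ≠ 0 and contradict nonvanishing determinant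
      have hconn' := hconn
      have hdet := nm_det_ne_zero (0 : Fin (m + 2)) hc hconn'
      apply hdet
      set res := LinearMap.funLeft ℝ ℝ ((0 : Fin (m + 2)).succAbove) with hres
      set colFun : Fin (m + 1) → (Fin (m + 1) → ℝ) :=
        fun j i => NM (0 : Fin (m + 2)) S i j with hcol
      obtain ⟨j0, hj0⟩ := sel_surj hc he0S
      have hmap : res (inc e0) ∈ Submodule.span ℝ
          (res '' (inc '' ((S.erase e0) : Set (Fin (m + 2) × Fin (m + 2))))) := by
        rw [← Submodule.map_span]
        exact Submodule.mem_map_of_mem hinc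
      have hsubset : res '' (inc '' ((S.erase e0) : Set (Fin (m + 2) × Fin (m + 2))))
          ⊆ colFun '' {j | j ≠ j0} := by
        rintro _ ⟨_, ⟨e, he, rfl⟩, rfl⟩
        obtain ⟨j, hj⟩ := sel_surj hc (Finset.mem_erase.mp he).2
        refine ⟨j, ?_, ?_⟩
        · intro hh
          apply (Finset.mem_erase.mp he).1
          rw [← hj, hh, hj0]
        · funext i
          simp [hcol, NM, hj, hres, LinearMap.funLeft]
      have hmem : colFun j0 ∈ Submodule.span ℝ (colFun '' {j | j ≠ j0}) := by
        have : res (inc e0) = colFun j0 := by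
          funext i
          simp [hcol, NM, hj0, hres, LinearMap.funLeft]
        rw [← this]
        exact Submodule.span_mono hsubset hmap
      have hnli : ¬ LinearIndependent ℝ colFun := by
        intro hli
        exact hli.notMem_span_image (by simp : j0 ∉ {j | j ≠ j0}) hmem
      obtain ⟨g, hg, i1, hgi⟩ := Fintype.not_linearIndependent_iff.mp hnli
      rw [← Matrix.exists_mulVec_eq_zero_iff]
      refine ⟨g, fun hh => hgi (by rw [hh]; rfl), ?_⟩
      funext i
      have := congrFun hg i
      simp only [Finset.sum_apply, Pi.smul_apply, smul_eq_mul, Pi.zero_apply] at this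
      simp only [Matrix.mulVec, dotProduct, Pi.zero_apply]
      rw [← this]
      exact Finset.sum_congr rfl fun j _ => mul_comm _ _
    rcases h.2 with hm | hm
    · exact key _ hm (Or.inl rfl)
    · exact key _ hm (Or.inr rfl)

/-- The bordered incidence matrix. -/
def BM (S : Finset (Fin (m + 2) × Fin (m + 2))) (u : Fin (m + 2)) :
    Matrix (Fin (m + 2)) (Fin (m + 2)) ℝ :=
  Matrix.of fun a j =>
    if hj : j = Fin.last (m + 1) then (if a = u then 1 else 0)
    else inc (sel (m + 1) S (j.castPred hj)) a

theorem BM_det (S : Finset (Fin (m + 2) × Fin (m + 2))) (u : Fin (m + 2)) :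
    (BM S u).det = (-1 : ℝ) ^ (u.val + (m + 1)) * (NM u S).det := by
  rw [Matrix.det_succ_column (BM S u) (Fin.last (m + 1)),
    Finset.sum_eq_single u (fun b _ hb => by simp [BM, hb]) (by simp)]
  have h1 : BM S u u (Fin.last (m + 1)) = 1 := by simp [BM]
  have h2 : (BM S u).submatrix u.succAbove (Fin.last (m + 1)).succAbove = NM u S := by
    ext i j
    simp only [Matrix.submatrix_apply, Fin.succAbove_last, BM, Matrix.of_apply, NM]
    rw [dif_neg (Fin.castSucc_lt_last j).ne]
    rw [Fin.castPred_castSucc]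
  rw [h1, h2, mul_one]
  congr 2

theorem det_eq_zero_of_colsum_zero (Q : Matrix (Fin (m + 2)) (Fin (m + 2)) ℝ)
    (h : ∀ j, ∑ a, Q a j = 0) : Q.det = 0 := by
  set f : (Fin (m + 2) → ℝ) →ₗ[ℝ] ℝ :=
    { toFun := fun x => ∑ a, x a
      map_add' := fun x y => by simp [Finset.sum_add_distrib]
      map_smul' := fun c x => by simp [Finset.mul_sum] } with hf
  have hker : ∀ j, (fun a => Q a j) ∈ LinearMap.ker f := fun j => by
    rw [LinearMap.mem_ker, hf]
    exact h j
  have hnli : ¬ LinearIndependent ℝ (fun j a => Q a j) := by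
    intro hli
    have hli' : LinearIndependent ℝ
        (fun j => (⟨fun a => Q a j, hker j⟩ : LinearMap.ker f)) := by
      apply LinearIndependent.of_comp (LinearMap.ker f).subtype
      exact hli
    have hle := hli'.fintype_card_le_finrank
    have hsurj : Function.Surjective f := by
      intro c
      refine ⟨Pi.single 0 c, ?_⟩
      rw [hf]
      simp [Pi.single_apply]
    have hrank := LinearMap.finrank_range_add_finrank_ker f
    rw [LinearMap.range_eq_top.mpr hsurj, finrank_top, Module.finrank_self,
      Module.finrank_fintype_fun_eq_card] at hrank
    simp only [Fintype.card_fin] at hrank hle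
    omega
  obtain ⟨g, hg, i1, hgi⟩ := Fintype.not_linearIndependent_iff.mp hnli
  rw [← Matrix.exists_mulVec_eq_zero_iff]
  refine ⟨g, fun hh => hgi (by rw [hh]; rfl), ?_⟩
  funext a
  have hga := congrFun hg a
  simp only [Finset.sum_apply, Pi.smul_apply, smul_eq_mul, Pi.zero_apply] at hga
  simp only [Matrix.mulVec, dotProduct, Pi.zero_apply]
  rw [← hga]
  exact Finset.sum_congr rfl fun j _ => mul_comm _ _

theorem BM_eq (S : Finset (Fin (m + 2) × Fin (m + 2)))
    (hS : S ∈ (edges m).powersetCard (m + 1)) (u v : Fin (m + 2)) :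
    (BM S u).det = (BM S v).det := by
  obtain ⟨hsub, hc⟩ := Finset.mem_powersetCard.mp hS
  have hu : BM S u
      = (BM S v).updateCol (Fin.last (m + 1)) (fun a => if a = u then 1 else 0) := by
    ext a j
    rw [Matrix.updateCol_apply]
    by_cases hj : j = Fin.last (m + 1)
    · rw [if_pos hj]
      simp [BM, hj]
    · rw [if_neg hj]
      simp only [BM, Matrix.of_apply, dif_neg hj]
  have hv : BM S v
      = (BM S v).updateCol (Fin.last (m + 1)) (fun a => if a = v then 1 else 0) := by
    ext a j
    rw [Matrix.updateCol_apply]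
    by_cases hj : j = Fin.last (m + 1)
    · rw [if_pos hj]
      simp [BM, hj]
    · rw [if_neg hj]
  have hsplit : ((fun a => if a = u then (1 : ℝ) else 0) : Fin (m + 2) → ℝ)
      = (fun a => (if a = u then (1 : ℝ) else 0) - (if a = v then 1 else 0))
        + (fun a => if a = v then 1 else 0) := by
    funext a; simp
  have hz : ((BM S v).updateCol (Fin.last (m + 1))
      (fun a => (if a = u then (1 : ℝ) else 0) - (if a = v then 1 else 0))).det = 0 := by
    apply det_eq_zero_of_colsum_zero
    intro j
    by_cases hj : j = Fin.last (m + 1)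
    · subst hj
      simp only [Matrix.updateCol_self]
      rw [Finset.sum_sub_distrib]
      simp [Finset.sum_ite_eq']
    · have : ∀ a, ((BM S v).updateCol (Fin.last (m + 1))
          (fun a => (if a = u then (1 : ℝ) else 0) - (if a = v then 1 else 0))) a j
          = inc (sel (m + 1) S (j.castPred hj)) a := by
        intro a
        rw [Matrix.updateCol_apply, if_neg hj]
        simp only [BM, Matrix.of_apply, dif_neg hj]
      rw [Finset.sum_congr rfl fun a _ => this a]
      have he : sel (m + 1) S (j.castPred hj) ∈ edges m := hsub (sel_mem hc _)
      have hne : (sel (m + 1) S (j.castPred hj)).1 ≠ (sel (m + 1) S (j.castPred hj)).2 :=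
        ne_of_lt (Finset.mem_filter.mp he).2
      unfold inc
      rw [Finset.sum_sub_distrib]
      simp [Finset.sum_ite_eq']
  rw [hu, hsplit, Matrix.det_updateCol_add, hz, zero_add, ← hv]

theorem nm_sign {S : Finset (Fin (m + 2) × Fin (m + 2))}
    (hS : S ∈ (edges m).powersetCard (m + 1)) (u v : Fin (m + 2)) :
    (-1 : ℝ) ^ (u.val + v.val) * (NM u S).det * (NM v S).det = (NM 0 S).det ^ 2 := by
  have hdu : ∀ w : Fin (m + 2),
      (NM w S).det = (-1 : ℝ) ^ (w.val + (m + 1)) * (BM S w).det := by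
    intro w
    rw [BM_det, ← mul_assoc, ← pow_add, Even.neg_one_pow ⟨w.val + (m + 1), by ring⟩, one_mul]
  rw [hdu u, hdu v, hdu 0, BM_eq S hS u 0, BM_eq S hS v 0]
  set d := (BM S 0).det with hd
  have h1 : (-1 : ℝ) ^ (u.val + v.val) * (-1 : ℝ) ^ (u.val + (m + 1))
      * (-1 : ℝ) ^ (v.val + (m + 1)) = 1 := by
    rw [← pow_add, ← pow_add]
    exact Even.neg_one_pow ⟨u.val + v.val + m + 1, by ring⟩
  have h0 : ((0 : Fin (m + 2)).val) = 0 := rfl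
  rw [h0]
  have h2 : ((-1 : ℝ) ^ (0 + (m + 1))) ^ 2 = 1 := by
    rw [← pow_mul]
    exact Even.neg_one_pow ⟨m + 1, by ring⟩
  linear_combination (d ^ 2) * h1 - (d ^ 2) * h2

theorem factor (W : Matrix (Fin (m + 2)) (Fin (m + 2)) ℝ) (hW : W.IsSymm)
    (Δ : Matrix (Fin (m + 2)) (Fin (m + 2)) ℝ)
    (hΔ : ∀ i j, Δ i j = if i = j then ∑ k ∈ Finset.univ.erase i, W i k else -W i j)
    (u v : Fin (m + 2)) :
    Δ.submatrix u.succAbove v.succAbove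
      = Matrix.of fun i j => ∑ e ∈ edges m,
          inc e (u.succAbove i) * W e.1 e.2 * inc e (v.succAbove j) := by
  have inc_fst : ∀ e : Fin (m + 2) × Fin (m + 2), e.1 ≠ e.2 → inc e e.1 = 1 := by
    intro e h; simp [inc, h]
  have inc_snd : ∀ e : Fin (m + 2) × Fin (m + 2), e.1 ≠ e.2 → inc e e.2 = -1 := by
    intro e h; simp [inc, Ne.symm h]
  have inc_zero : ∀ (e : Fin (m + 2) × Fin (m + 2)) (a : Fin (m + 2)),
      a ≠ e.1 → a ≠ e.2 → inc e a = 0 := by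
    intro e a h1 h2; simp [inc, h1, h2]
  have hzero2 : ∀ e ∈ edges m, ∀ a b : Fin (m + 2), a ≠ b → e ≠ (a, b) → e ≠ (b, a) →
      inc e a * W e.1 e.2 * inc e b = 0 := by
    intro e heE a b hab hne1 hne2
    have hne12 : e.1 ≠ e.2 := ne_of_lt (Finset.mem_filter.mp heE).2
    by_cases h1 : a = e.1
    · have hb2 : b ≠ e.2 := fun hh => hne1 (by rw [h1, hh])
      have hb1 : b ≠ e.1 := fun hh => hab (h1.trans hh.symm)
      rw [inc_zero e b hb1 hb2, mul_zero]
    · by_cases h2 : a = e.2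
      · have hb1 : b ≠ e.1 := fun hh => hne2 (by rw [hh, h2])
        have hb2 : b ≠ e.2 := fun hh => hab (hh.trans h2.symm).symm
        rw [inc_zero e b hb1 hb2, mul_zero]
      · rw [inc_zero e a h1 h2, zero_mul, zero_mul]
  have key : ∀ a b : Fin (m + 2),
      (if a = b then ∑ k ∈ Finset.univ.erase a, W a k else -W a b)
        = ∑ e ∈ edges m, inc e a * W e.1 e.2 * inc e b := by
    intro a b
    by_cases hab : a = b
    · subst hab
      rw [if_pos rfl]
      have hfil : ∑ e ∈ edges m, inc e a * W e.1 e.2 * inc e a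
          = ∑ e ∈ (edges m).filter (fun e => a = e.1 ∨ a = e.2),
              inc e a * W e.1 e.2 * inc e a :=
        (Finset.sum_filter_of_ne (fun e he hne => by
          by_contra hcon
          push_neg at hcon
          rw [inc_zero e a hcon.1 hcon.2] at hne
          simp at hne)).symm
      have hterm : ∀ e ∈ (edges m).filter (fun e => a = e.1 ∨ a = e.2),
          inc e a * W e.1 e.2 * inc e a = W e.1 e.2 := by
        intro e he
        obtain ⟨heE, hor⟩ := Finset.mem_filter.mp he
        have hne12 : e.1 ≠ e.2 := ne_of_lt (Finset.mem_filter.mp heE).2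
        rcases hor with h1 | h2
        · rw [h1, inc_fst e hne12]; ring
        · rw [h2, inc_snd e hne12]; ring
      rw [hfil, Finset.sum_congr rfl hterm]
      refine Finset.sum_nbij' (i := fun k => if a < k then (a, k) else (k, a))
        (j := fun e => if e.1 = a then e.2 else e.1) ?_ ?_ ?_ ?_ ?_
      · intro k hk
        have hka : k ≠ a := Finset.ne_of_mem_erase hk
        rcases lt_or_gt_of_ne hka with h | h
        · rw [if_neg (asymm h)]
          exact Finset.mem_filter.mpr ⟨by simp [edges, h], Or.inr rfl⟩
        · rw [if_pos h]
          exact Finset.mem_filter.mpr ⟨by simp [edges, h], Or.inl rfl⟩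
      · intro e he
        obtain ⟨heE, hor⟩ := Finset.mem_filter.mp he
        have hne12 : e.1 ≠ e.2 := ne_of_lt (Finset.mem_filter.mp heE).2
        by_cases h1 : e.1 = a
        · rw [if_pos h1]
          exact Finset.mem_erase.mpr ⟨fun hh => hne12 (h1.trans hh.symm), Finset.mem_univ _⟩
        · rw [if_neg h1]
          exact Finset.mem_erase.mpr ⟨fun hh => h1 hh, Finset.mem_univ _⟩
      · intro k hk
        have hka : k ≠ a := Finset.ne_of_mem_erase hk
        rcases lt_or_gt_of_ne hka with h | h
        · rw [if_neg (asymm h)]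
          simp [fun hh => hka hh]
        · rw [if_pos h]
          simp
      · intro e he
        obtain ⟨heE, hor⟩ := Finset.mem_filter.mp he
        have hlt : e.1 < e.2 := (Finset.mem_filter.mp heE).2
        by_cases h1 : e.1 = a
        · rw [if_pos h1, if_pos (h1 ▸ hlt)]
          rw [← h1]
        · rw [if_neg h1]
          have h2 : a = e.2 := hor.resolve_left (fun hh => h1 hh.symm)
          rw [if_neg (by rw [← h2] at hlt; exact asymm hlt)]
          rw [h2]
      · intro k hk
        have hka : k ≠ a := Finset.ne_of_mem_erase hk
        rcases lt_or_gt_of_ne hka with h | h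
        · rw [if_neg (asymm h)]
          exact (hW.apply a k).symm
        · rw [if_pos h]
    · rw [if_neg hab]
      rcases lt_or_gt_of_ne hab with hlt | hgt
      · rw [Finset.sum_eq_single_of_mem (a, b) (by simp [edges, hlt])
          (fun e heE hne => hzero2 e heE a b hab hne
            (fun hh => asymm hlt (by rw [hh] at heE; exact (Finset.mem_filter.mp heE).2)))]
        have h1 : inc (a, b) a = 1 := inc_fst (a, b) hab
        have h2 : inc (a, b) b = -1 := inc_snd (a, b) hab
        rw [h1, h2]
        ring
      · rw [Finset.sum_eq_single_of_mem (b, a) (by simp [edges, hgt])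
          (fun e heE hne => hzero2 e heE a b hab
            (fun hh => asymm hgt (by rw [hh] at heE; exact (Finset.mem_filter.mp heE).2)) hne)]
        have hba : b ≠ a := fun hh => hab hh.symm
        have h1 : inc (b, a) a = -1 := inc_snd (b, a) hba
        have h2 : inc (b, a) b = 1 := inc_fst (b, a) hba
        rw [h1, h2, hW.apply a b]
        ring
  ext i j
  simp only [Matrix.submatrix_apply, Matrix.of_apply]
  rw [hΔ]
  exact key _ _

end
end MTT

/-- Matrix-Tree theorem: for a symmetric weight matrix `W` on `n ≥ 2` vertices
(here `n = m + 2`) with Laplacian `Δ` (`Δ_{ij} = -w_{ij}` for `i ≠ j`,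
`Δ_{ii} = Σ_{j≠i} w_{ij}`), every `(u,v)`-minor of `Δ` equals
`Σ_{T spanning tree} Π_{{i,j} ∈ E_T} w_{ij}`; in particular all minors are equal. -/
theorem matrix_tree_theorem (m : ℕ) (W : Matrix (Fin (m + 2)) (Fin (m + 2)) ℝ)
    (hW : W.IsSymm)
    (Δ : Matrix (Fin (m + 2)) (Fin (m + 2)) ℝ)
    (hΔ : ∀ i j, Δ i j = if i = j then ∑ k ∈ Finset.univ.erase i, W i k else -W i j) :
    ∀ u v : Fin (m + 2),
      (-1 : ℝ) ^ (u.val + v.val) * (Δ.submatrix u.succAbove v.succAbove).det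
        = ∑ T ∈ Finset.univ.filter (fun T : SimpleGraph (Fin (m + 2)) => T.IsTree),
            ∏ e ∈ Finset.univ.filter
                (fun e : Fin (m + 2) × Fin (m + 2) => e.1 < e.2 ∧ T.Adj e.1 e.2),
              W e.1 e.2 := by
  classical
  intro u v
  rw [MTT.factor W hW Δ hΔ u v, MTT.cauchy_binet, Finset.mul_sum]
  have hterm : ∀ S ∈ (MTT.edges m).powersetCard (m + 1),
      (-1 : ℝ) ^ (u.val + v.val) * ((∏ e ∈ S, W e.1 e.2)
        * Matrix.det (Matrix.of fun i j => MTT.inc (MTT.sel (m + 1) S j) (u.succAbove i))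
        * Matrix.det (Matrix.of fun i j => MTT.inc (MTT.sel (m + 1) S j) (v.succAbove i)))
      = (if (MTT.graphOf S).Connected then ∏ e ∈ S, W e.1 e.2 else 0) := by
    intro S hS
    have hc : S.card = m + 1 := (Finset.mem_powersetCard.mp hS).2
    have hs := MTT.nm_sign hS u v
    by_cases hconn : (MTT.graphOf S).Connected
    · rw [if_pos hconn]
      have h0 : (MTT.NM (0 : Fin (m + 2)) S).det ≠ 0 := MTT.nm_det_ne_zero 0 hc hconn
      have h1 : (MTT.NM (0 : Fin (m + 2)) S).det ^ 2 = 1 := by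
        rcases MTT.nm_unimod (0 : Fin (m + 2)) S with h | h | h
        · exact absurd h h0
        · rw [h]; norm_num
        · rw [h]; norm_num
      show (-1 : ℝ) ^ (u.val + v.val) * ((∏ e ∈ S, W e.1 e.2)
        * (MTT.NM u S).det * (MTT.NM v S).det) = ∏ e ∈ S, W e.1 e.2
      linear_combination (∏ e ∈ S, W e.1 e.2) * hs + (∏ e ∈ S, W e.1 e.2) * h1
    · rw [if_neg hconn]
      show (-1 : ℝ) ^ (u.val + v.val) * ((∏ e ∈ S, W e.1 e.2)
        * (MTT.NM u S).det * (MTT.NM v S).det) = 0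
      rw [MTT.nm_det_zero u hc hconn]
      ring
  rw [Finset.sum_congr rfl hterm, ← Finset.sum_filter]
  -- bijection between edge sets and trees
  have hsof : ∀ T : SimpleGraph (Fin (m + 2)),
      MTT.graphOf (Finset.univ.filter
        (fun p : Fin (m + 2) × Fin (m + 2) => p.1 < p.2 ∧ T.Adj p.1 p.2)) = T := by
    intro T
    ext a b
    simp only [MTT.graphOf, Finset.mem_filter, Finset.mem_univ, true_and]
    constructor
    · rintro ⟨hne, ⟨-, h⟩ | ⟨-, h⟩⟩
      · exact h
      · exact h.symm
    · intro hadj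
      refine ⟨hadj.ne, ?_⟩
      rcases lt_or_gt_of_ne hadj.ne with h | h
      · exact Or.inl ⟨h, hadj⟩
      · exact Or.inr ⟨h, hadj.symm⟩
  have hfos : ∀ S ∈ ((MTT.edges m).powersetCard (m + 1)).filter
      (fun S => (MTT.graphOf S).Connected),
      Finset.univ.filter (fun p : Fin (m + 2) × Fin (m + 2) =>
        p.1 < p.2 ∧ (MTT.graphOf S).Adj p.1 p.2) = S := by
    intro S hS
    obtain ⟨hpc, -⟩ := Finset.mem_filter.mp hS
    have hsub : S ⊆ MTT.edges m := (Finset.mem_powersetCard.mp hpc).1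
    ext p
    constructor
    · intro hp
      obtain ⟨-, hlt, -, hmem | hmem⟩ := Finset.mem_filter.mp hp
      · exact hmem
      · exact absurd ((Finset.mem_filter.mp (hsub hmem)).2) (asymm hlt)
    · intro hp
      have hlt : p.1 < p.2 := (Finset.mem_filter.mp (hsub hp)).2
      exact Finset.mem_filter.mpr ⟨Finset.mem_univ _, hlt, ne_of_lt hlt, Or.inl hp⟩
  have hcardbij : ∀ T : SimpleGraph (Fin (m + 2)),
      (Finset.univ.filter (fun p : Fin (m + 2) × Fin (m + 2) =>
        p.1 < p.2 ∧ T.Adj p.1 p.2)).card = T.edgeFinset.card := by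
    intro T
    refine Finset.card_bij (fun (p : Fin (m + 2) × Fin (m + 2)) _ => s(p.1, p.2)) ?_ ?_ ?_
    · intro p hp
      rw [SimpleGraph.mem_edgeFinset, SimpleGraph.mem_edgeSet]
      exact (Finset.mem_filter.mp hp).2.2
    · intro p hp q hq hpq
      obtain ⟨hp1, -⟩ := (Finset.mem_filter.mp hp).2
      obtain ⟨hq1, -⟩ := (Finset.mem_filter.mp hq).2
      rcases Sym2.mk_eq_mk_iff.mp hpq with h | h
      · exact h
      · rw [Prod.ext_iff] at h
        obtain ⟨h1, h2⟩ := h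
        simp only [Prod.fst_swap, Prod.snd_swap] at h1 h2
        exact absurd (h1 ▸ h2 ▸ hq1) (asymm hp1)
    · intro e he
      rw [SimpleGraph.mem_edgeFinset] at he
      induction e with
      | _ a b =>
        rw [SimpleGraph.mem_edgeSet] at he
        rcases lt_or_gt_of_ne he.ne with h | h
        · exact ⟨(a, b), Finset.mem_filter.mpr ⟨Finset.mem_univ _, h, he⟩, rfl⟩
        · exact ⟨(b, a), Finset.mem_filter.mpr ⟨Finset.mem_univ _, h, he.symm⟩, Sym2.eq_swap⟩
  refine Finset.sum_nbij' (i := fun S => MTT.graphOf S)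
    (j := fun T => Finset.univ.filter
      (fun p : Fin (m + 2) × Fin (m + 2) => p.1 < p.2 ∧ T.Adj p.1 p.2))
    ?_ ?_ ?_ ?_ ?_
  · intro S hS
    obtain ⟨hpc, hconn⟩ := Finset.mem_filter.mp hS
    exact Finset.mem_filter.mpr ⟨Finset.mem_univ _,
      ⟨hconn, MTT.acyclic_of_connected hpc hconn⟩⟩
  · intro T hT
    have hT' : T.IsTree := (Finset.mem_filter.mp hT).2
    refine Finset.mem_filter.mpr ⟨?_, ?_⟩
    · refine Finset.mem_powersetCard.mpr ⟨?_, ?_⟩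
      · intro p hp
        exact Finset.mem_filter.mpr ⟨Finset.mem_univ _, (Finset.mem_filter.mp hp).2.1⟩
      · have := hT'.card_edgeFinset
        rw [Fintype.card_fin] at this
        rw [hcardbij T]
        omega
    · rw [hsof T]
      exact hT'.isConnected
  · intro S hS
    exact hfos S hS
  · intro T hT
    exact hsof T
  · intro S hS
    rw [hfos S hS]
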